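/- Let d ≥ 3 be a prime, F = ℤ/dℤ, and let n ≥ 1 and 0 ≤ κ ≤ n be integers. Let A = {C ⊆ F^n : C is a linear subspace, C ⊆ C^⊥, dim_F C = κ}, and for x ∈ F^n let A_x = {C ∈ A : x ∈ C^⊥}. Then for any two nonzero vectors x, y ∈ F^n with x·x = y·y one has |A_x| = |A_y|. -/
import Mathlib


/- STATEMENT 4 (Lemma on balanced ensembles, d ≥ 3): for nonzero x, y with x·x = y·y,
   the numbers of self-orthogonal κ-dimensional codes C with x ∈ C^⊥ and with y ∈ C^⊥
   coincide. -/

open scoped BigOperators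

noncomputable section

/-- Dot product `x·y = Σᵢ xᵢ yᵢ` in `ℤ/dℤ`. -/
def dotp {d n : ℕ} (x y : Fin n → ZMod d) : ZMod d := ∑ i, x i * y i

/-- `C^⊥ = {y : ∀ x ∈ C, x·y = 0}`. -/
def dualSet {d n : ℕ} (C : Set (Fin n → ZMod d)) : Set (Fin n → ZMod d) :=
  {y | ∀ x ∈ C, dotp x y = 0}

/-- `A = {C : C linear, C ⊆ C^⊥, dim C = κ}`, the self-orthogonal κ-dimensional codes. -/
def Aset (d n κ : ℕ) : Set (Submodule (ZMod d) (Fin n → ZMod d)) :=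
  {C | (C : Set (Fin n → ZMod d)) ⊆ dualSet (C : Set (Fin n → ZMod d)) ∧
    Module.finrank (ZMod d) C = κ}

/-- `A_x = {C ∈ A : x ∈ C^⊥}`. -/
def AsetX (d n κ : ℕ) (x : Fin n → ZMod d) : Set (Submodule (ZMod d) (Fin n → ZMod d)) :=
  {C ∈ Aset d n κ | x ∈ dualSet (C : Set (Fin n → ZMod d))}

namespace Stmt4Aux

variable {d n : ℕ}

lemma dotp_eq (x y : Fin n → ZMod d) : dotp x y = dotProduct x y := rfl

lemma dotp_comm (x y : Fin n → ZMod d) : dotp x y = dotp y x :=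
  dotProduct_comm x y

lemma dotp_sub_left (x y z : Fin n → ZMod d) :
    dotp (x - y) z = dotp x z - dotp y z := by
  simp [dotp_eq, sub_dotProduct]

lemma dotp_sub_right (x y z : Fin n → ZMod d) :
    dotp x (y - z) = dotp x y - dotp x z := by
  simp [dotp_eq, dotProduct_sub]

lemma dotp_add_left (x y z : Fin n → ZMod d) :
    dotp (x + y) z = dotp x z + dotp y z := by
  simp [dotp_eq, add_dotProduct]

lemma dotp_add_right (x y z : Fin n → ZMod d) :
    dotp x (y + z) = dotp x y + dotp x z := by
  simp [dotp_eq, dotProduct_add]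

lemma dotp_smul_left (c : ZMod d) (x y : Fin n → ZMod d) :
    dotp (c • x) y = c * dotp x y := by
  simp [dotp_eq, smul_dotProduct, smul_eq_mul]

lemma dotp_smul_right (c : ZMod d) (x y : Fin n → ZMod d) :
    dotp x (c • y) = c * dotp x y := by
  simp [dotp_eq, dotProduct_smul, smul_eq_mul]

lemma dotp_neg_neg (x y : Fin n → ZMod d) : dotp (-x) (-y) = dotp x y := by
  simp [dotp]

/-- The linear functional `u ↦ dotp u v`. -/
def dotpL (v : Fin n → ZMod d) : (Fin n → ZMod d) →ₗ[ZMod d] ZMod d where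
  toFun u := dotp u v
  map_add' a b := dotp_add_left a b v
  map_smul' c a := by simpa using dotp_smul_left c a v

/-- Reflection linear map in the vector `v`. -/
def reflL [Fact d.Prime] (v : Fin n → ZMod d) :
    (Fin n → ZMod d) →ₗ[ZMod d] (Fin n → ZMod d) :=
  LinearMap.id - LinearMap.smulRight ((2 / dotp v v) • dotpL v) v

lemma reflL_apply [Fact d.Prime] (v u : Fin n → ZMod d) :
    reflL v u = u - ((2 / dotp v v) * dotp u v) • v := by
  simp [reflL, dotpL, smul_smul]

lemma dotp_reflL [Fact d.Prime] (v : Fin n → ZMod d) (hv : dotp v v ≠ 0)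
    (u w : Fin n → ZMod d) : dotp (reflL v u) (reflL v w) = dotp u w := by
  have h2 : (2 / dotp v v) * dotp v v = 2 := div_mul_cancel₀ 2 hv
  rw [reflL_apply, reflL_apply, dotp_sub_left, dotp_sub_right, dotp_sub_right]
  simp only [dotp_smul_left, dotp_smul_right]
  rw [dotp_comm v w]
  set c := (2 : ZMod d) / dotp v v with hc
  linear_combination (c * dotp u v * dotp w v) * h2

lemma reflL_involutive [Fact d.Prime] (v : Fin n → ZMod d) (hv : dotp v v ≠ 0) :
    Function.Involutive (reflL v) := by
  intro u
  have h2 : (2 / dotp v v) * dotp v v = 2 := div_mul_cancel₀ 2 hv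
  rw [reflL_apply, reflL_apply, dotp_sub_left]
  simp only [dotp_smul_left]
  set c := (2 : ZMod d) / dotp v v with hc
  rw [sub_sub, ← add_smul]
  have h0 : c * dotp u v + c * (dotp u v - c * dotp u v * dotp v v) = 0 := by
    linear_combination (-(c * dotp u v)) * h2
  rw [h0, zero_smul, sub_zero]

/-- Reflection as a linear equivalence. -/
def reflE [Fact d.Prime] (v : Fin n → ZMod d) (hv : dotp v v ≠ 0) :
    (Fin n → ZMod d) ≃ₗ[ZMod d] (Fin n → ZMod d) :=
  LinearEquiv.ofInvolutive (reflL v) (reflL_involutive v hv)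

lemma reflE_apply [Fact d.Prime] (v : Fin n → ZMod d) (hv : dotp v v ≠ 0)
    (u : Fin n → ZMod d) :
    reflE v hv u = u - ((2 / dotp v v) * dotp u v) • v := reflL_apply v u

/-- The key geometric fact: if `x·x = y·y` and `x-y` is anisotropic, the reflection
in `x-y` maps `x` to `y`. -/
lemma reflE_maps [Fact d.Prime] (h2 : (2 : ZMod d) ≠ 0) {x y : Fin n → ZMod d}
    (hxy : dotp x x = dotp y y)
    (h : dotp (x - y) (x - y) ≠ 0) : reflE (x - y) h x = y := by
  have hexp : dotp (x - y) (x - y) = 2 * dotp x (x - y) := by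
    rw [dotp_sub_left, dotp_sub_right, dotp_sub_right, dotp_comm y x]
    linear_combination (-1 : ZMod d) * hxy
  rw [reflE_apply, dotp_comm x (x - y)] at *
  rw [hexp]
  rw [div_mul_cancel_left₀, inv_mul_cancel₀, one_smul, sub_sub_cancel]
  · intro h0; rw [hexp, h0, mul_zero] at h; exact h rfl
  · exact h2

lemma exists_dotp_ne {x : Fin n → ZMod d} (hx : x ≠ 0) : ∃ z, dotp x z ≠ 0 := by
  obtain ⟨i, hi⟩ := Function.ne_iff.mp hx
  refine ⟨Pi.single i 1, ?_⟩
  have : dotp x (Pi.single i 1) = x i := by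
    simp [dotp, Pi.single_apply, mul_ite, Finset.sum_ite_eq']
  rw [this]
  simpa using hi

lemma exists_common_z {x y : Fin n → ZMod d} (hx : x ≠ 0) (hy : y ≠ 0) :
    ∃ z, dotp x z ≠ 0 ∧ dotp y z ≠ 0 := by
  obtain ⟨z1, hz1⟩ := exists_dotp_ne hx
  obtain ⟨z2, hz2⟩ := exists_dotp_ne hy
  by_cases h1 : dotp y z1 ≠ 0
  · exact ⟨z1, hz1, h1⟩
  by_cases h2 : dotp x z2 ≠ 0
  · exact ⟨z2, h2, hz2⟩
  push_neg at h1 h2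
  refine ⟨z1 + z2, ?_, ?_⟩
  · rw [dotp_add_right, h2, add_zero]; exact hz1
  · rw [dotp_add_right, h1, zero_add]; exact hz2

/-- An isometry of the dot product fixing `x ↦ y` exists whenever `x·x = y·y`
and `x, y ≠ 0` (Witt-type transitivity), provided `2 ≠ 0`. -/
lemma exists_isom [Fact d.Prime] (h2 : (2 : ZMod d) ≠ 0) {x y : Fin n → ZMod d}
    (hx : x ≠ 0) (hy : y ≠ 0) (hxy : dotp x x = dotp y y) :
    ∃ e : (Fin n → ZMod d) ≃ₗ[ZMod d] (Fin n → ZMod d),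
      (∀ u w, dotp (e u) (e w) = dotp u w) ∧ e x = y := by
  by_cases hA : dotp (x - y) (x - y) ≠ 0
  · exact ⟨reflE (x - y) hA, fun u w => dotp_reflL _ hA u w, reflE_maps h2 hxy hA⟩
  by_cases hB : dotp (x + y) (x + y) ≠ 0
  · -- reflect x to -y, then negate
    have hxy' : dotp x x = dotp (-y) (-y) := by rw [dotp_neg_neg]; exact hxy
    have hB' : dotp (x - -y) (x - -y) ≠ 0 := by rw [sub_neg_eq_add]; exact hB
    refine ⟨(reflE (x - -y) hB').trans (LinearEquiv.neg (ZMod d)), ?_, ?_⟩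
    · intro u w
      simp only [LinearEquiv.trans_apply, LinearEquiv.neg_apply]
      rw [dotp_neg_neg]
      exact dotp_reflL _ hB' u w
    · simp only [LinearEquiv.trans_apply, LinearEquiv.neg_apply]
      rw [reflE_maps h2 hxy' hB', neg_neg]
  · -- totally isotropic orthogonal case
    push_neg at hA hB
    have hQx : dotp x x = 0 := by
      have hs : dotp (x - y) (x - y) + dotp (x + y) (x + y) = 2 * (2 * dotp x x) := by
        rw [dotp_sub_left, dotp_sub_right, dotp_sub_right, dotp_add_left,
          dotp_add_right, dotp_add_right, dotp_comm y x]
        linear_combination (-2 : ZMod d) * hxy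
      rw [hA, hB, add_zero] at hs
      have := (mul_eq_zero.mp hs.symm).resolve_left h2
      exact (mul_eq_zero.mp this).resolve_left h2
    have hIxy : dotp x y = 0 := by
      have hs : dotp (x + y) (x + y) - dotp (x - y) (x - y) = 2 * (2 * dotp x y) := by
        rw [dotp_sub_left, dotp_sub_right, dotp_sub_right, dotp_add_left,
          dotp_add_right, dotp_add_right, dotp_comm y x]
        ring
      rw [hA, hB, sub_zero] at hs
      have := (mul_eq_zero.mp hs.symm).resolve_left h2
      exact (mul_eq_zero.mp this).resolve_left h2
    have hQy : dotp y y = 0 := hxy ▸ hQx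
    obtain ⟨z, hxz, hyz⟩ := exists_common_z hx hy
    -- w := z + t • x with t chosen so that w is isotropic
    set t : ZMod d := -(dotp z z) / (2 * dotp x z) with ht
    set w : Fin n → ZMod d := z + t • x with hw
    have hxw : dotp x w = dotp x z := by
      rw [hw, dotp_add_right, dotp_smul_right, hQx, mul_zero, add_zero]
    have hyw : dotp y w = dotp y z := by
      rw [hw, dotp_add_right, dotp_smul_right, dotp_comm y x, hIxy, mul_zero, add_zero]
    have hQw : dotp w w = 0 := by
      rw [hw, dotp_add_left, dotp_add_right, dotp_add_right, dotp_smul_left,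
        dotp_smul_right, dotp_smul_left, dotp_smul_right, hQx, dotp_comm z x]
      have h2xz : 2 * dotp x z ≠ 0 := mul_ne_zero h2 hxz
      have : t * (2 * dotp x z) = -(dotp z z) := div_mul_cancel₀ _ h2xz
      linear_combination this
    have hxw' : dotp x w ≠ 0 := by rw [hxw]; exact hxz
    have hyw' : dotp y w ≠ 0 := by rw [hyw]; exact hyz
    have hAxw : dotp (x - w) (x - w) ≠ 0 := by
      rw [dotp_sub_left, dotp_sub_right, dotp_sub_right, hQx, hQw, dotp_comm w x]
      intro h0
      apply hxw'
      have : (2 : ZMod d) * dotp x w = 0 := by linear_combination (-1 : ZMod d) * h0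
      exact (mul_eq_zero.mp this).resolve_left h2
    have hAyw : dotp (w - y) (w - y) ≠ 0 := by
      rw [dotp_sub_left, dotp_sub_right, dotp_sub_right, hQy, hQw, dotp_comm y w]
      intro h0
      apply hyw'
      rw [dotp_comm y w]
      have : (2 : ZMod d) * dotp w y = 0 := by linear_combination (-1 : ZMod d) * h0
      exact (mul_eq_zero.mp this).resolve_left h2
    have hQxw : dotp x x = dotp w w := by rw [hQx, hQw]
    have hQwy : dotp w w = dotp y y := by rw [hQw, hQy]
    refine ⟨(reflE (x - w) hAxw).trans (reflE (w - y) hAyw), ?_, ?_⟩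
    · intro u v
      simp only [LinearEquiv.trans_apply]
      exact (dotp_reflL _ hAyw _ _).trans (dotp_reflL _ hAxw u v)
    · simp only [LinearEquiv.trans_apply]
      rw [reflE_maps h2 hQxw hAxw, reflE_maps h2 hQwy hAyw]

/-- An isometry maps `AsetX x` into `AsetX (e x)`. -/
lemma mem_asetX_map [Fact d.Prime] {κ : ℕ}
    (e : (Fin n → ZMod d) ≃ₗ[ZMod d] (Fin n → ZMod d))
    (he : ∀ u w, dotp (e u) (e w) = dotp u w) (x : Fin n → ZMod d)
    {C : Submodule (ZMod d) (Fin n → ZMod d)} (hC : C ∈ AsetX d n κ x) :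
    Submodule.map (e : (Fin n → ZMod d) →ₗ[ZMod d] (Fin n → ZMod d)) C
      ∈ AsetX d n κ (e x) := by
  obtain ⟨⟨hso, hrk⟩, hdual⟩ := hC
  refine ⟨⟨?_, ?_⟩, ?_⟩
  · intro b hb a ha
    rw [Submodule.map_coe] at hb ha
    obtain ⟨v, hv, rfl⟩ := hb
    obtain ⟨u, hu, rfl⟩ := ha
    exact (he u v).trans (hso hv u hu)
  · rw [LinearEquiv.finrank_map_eq]
    exact hrk
  · intro a ha
    rw [Submodule.map_coe] at ha
    obtain ⟨u, hu, rfl⟩ := ha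
    exact (he u x).trans (hdual u hu)

lemma asetX_map_eq [Fact d.Prime] {κ : ℕ}
    (e : (Fin n → ZMod d) ≃ₗ[ZMod d] (Fin n → ZMod d))
    (he : ∀ u w, dotp (e u) (e w) = dotp u w) (x : Fin n → ZMod d) :
    Submodule.map (e : (Fin n → ZMod d) →ₗ[ZMod d] (Fin n → ZMod d)) '' (AsetX d n κ x)
      = AsetX d n κ (e x) := by
  apply Set.Subset.antisymm
  · rintro _ ⟨C, hC, rfl⟩
    exact mem_asetX_map e he x hC
  · intro C hC
    refine ⟨Submodule.map (e.symm : (Fin n → ZMod d) →ₗ[ZMod d] (Fin n → ZMod d)) C, ?_, ?_⟩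
    · have he' : ∀ u w, dotp (e.symm u) (e.symm w) = dotp u w := by
        intro u w
        conv_rhs => rw [← e.apply_symm_apply u, ← e.apply_symm_apply w, he]
      have := mem_asetX_map e.symm he' (e x) hC
      rwa [e.symm_apply_apply] at this
    · rw [← Submodule.map_comp]
      convert Submodule.map_id C
      ext u
      simp

end Stmt4Aux

theorem stmt_4 (d : ℕ) [NeZero d] (hd : d.Prime) (hd3 : 3 ≤ d) (n : ℕ) (hn : 1 ≤ n)
    (κ : ℕ) (hκ : κ ≤ n) (x y : Fin n → ZMod d) (hx : x ≠ 0) (hy : y ≠ 0)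
    (hxy : dotp x x = dotp y y) :
    (AsetX d n κ x).ncard = (AsetX d n κ y).ncard := by
  haveI : Fact d.Prime := ⟨hd⟩
  have h2 : (2 : ZMod d) ≠ 0 := by
    have hnd : ¬ (d ∣ 2) := Nat.not_dvd_of_pos_of_lt (by norm_num) (by omega)
    intro h
    apply hnd
    rw [← Nat.cast_ofNat] at h
    exact (ZMod.natCast_eq_zero_iff 2 d).mp h
  obtain ⟨e, he, hex⟩ := Stmt4Aux.exists_isom h2 hx hy hxy
  have h1 := Stmt4Aux.asetX_map_eq (κ := κ) e he x
  rw [hex] at h1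
  rw [← h1]
  exact (Set.ncard_image_of_injective _
    (Submodule.map_injective_of_injective e.injective)).symm

end
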